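/- If a bounded sequence x of complex numbers has Cesàro mean converging to c, then its logarithmic mean also converges to c: if (1/(n+1)) ∑_{k=0}^n x_k → c, then (1/log(n+2)) ∑_{k=0}^n x_k/(k+1) → c as n → ∞. -/

import Mathlib

open Filter Finset

private lemma aux_low (k : ℕ) :
    ((k : ℝ) + 2)⁻¹ ≤ Real.log ((k : ℝ) + 2) - Real.log ((k : ℝ) + 1) := by
  have h1 : (0:ℝ) < (k:ℝ)+1 := by positivity
  have h2 : (0:ℝ) < (k:ℝ)+2 := by positivity
  have h := Real.log_le_sub_one_of_pos (show (0:ℝ) < ((k:ℝ)+1)/((k:ℝ)+2) by positivity)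
  rw [Real.log_div h1.ne' h2.ne'] at h
  have h3 : ((k:ℝ)+1)/((k:ℝ)+2) - 1 = -(((k:ℝ)+2)⁻¹) := by
    field_simp
    ring
  linarith [h3 ▸ h]

private lemma aux_up (k : ℕ) :
    Real.log ((k : ℝ) + 2) - Real.log ((k : ℝ) + 1) ≤ ((k : ℝ) + 1)⁻¹ := by
  have h1 : (0:ℝ) < (k:ℝ)+1 := by positivity
  have h2 : (0:ℝ) < (k:ℝ)+2 := by positivity
  have h := Real.log_le_sub_one_of_pos (show (0:ℝ) < ((k:ℝ)+2)/((k:ℝ)+1) by positivity)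
  rw [Real.log_div h2.ne' h1.ne'] at h
  have h3 : ((k:ℝ)+2)/((k:ℝ)+1) - 1 = ((k:ℝ)+1)⁻¹ := by
    field_simp
    ring
  linarith [h3 ▸ h]

private lemma aux_W_le (n : ℕ) :
    ∑ k ∈ range n, ((k : ℝ) + 2)⁻¹ ≤ Real.log ((n : ℝ) + 1) := by
  induction n with
  | zero => simp
  | succ n ih =>
      rw [sum_range_succ]
      have := aux_low n
      have e : (n:ℝ) + 1 + 1 = (n:ℝ) + 2 := by ring
      push_cast
      rw [e]
      linarith

private lemma aux_log_le (n : ℕ) :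
    Real.log ((n : ℝ) + 2) ≤ ∑ k ∈ range n, ((k : ℝ) + 2)⁻¹ + 2 := by
  induction n with
  | zero =>
      simp only [range_zero, sum_empty, zero_add]
      have := Real.log_le_sub_one_of_pos (show (0:ℝ) < (0:ℝ)+2 by norm_num)
      norm_num at this ⊢
      linarith
  | succ n ih =>
      rw [sum_range_succ]
      have h := aux_up (n + 1)
      have e1 : (n:ℝ) + 1 + 2 = (n:ℝ) + 3 := by ring
      have e2 : (n:ℝ) + 1 + 1 = (n:ℝ) + 2 := by ring
      push_cast at h ⊢
      rw [e1] at h ⊢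
      rw [e2] at h
      linarith

private lemma aux_key (x : ℕ → ℂ) (n : ℕ) :
    ∑ k ∈ range (n + 1), x k / (k + 1) =
      ((n : ℂ) + 1)⁻¹ * ∑ k ∈ range (n + 1), x k +
        ∑ k ∈ range n, (((k : ℂ) + 1)⁻¹ * ∑ j ∈ range (k + 1), x j) / ((k : ℂ) + 2) := by
  induction n with
  | zero => simp
  | succ n ih =>
      have h1 : ((n:ℂ)+1) ≠ 0 := by
        intro h
        have := congrArg Complex.re h
        push_cast at this
        simp at this
        linarith [Nat.cast_nonneg (α := ℝ) n]
      have h2 : ((n:ℂ)+2) ≠ 0 := by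
        intro h
        have := congrArg Complex.re h
        push_cast at this
        simp at this
        linarith [Nat.cast_nonneg (α := ℝ) n]
      rw [sum_range_succ (fun k => x k / ((k:ℂ) + 1)), ih,
        sum_range_succ (fun k => (((k : ℂ) + 1)⁻¹ * ∑ j ∈ range (k + 1), x j) / ((k : ℂ) + 2)),
        sum_range_succ (fun k => x k) (n+1)]
      have h3 : ((n:ℂ)+1+1) ≠ 0 := by
        have : ((n:ℂ)+1+1) = ((n:ℂ)+2) := by ring
        rw [this]; exact h2
      push_cast
      field_simp
      ring

/-- If a bounded sequence `x` of complex numbers has Cesàro mean converging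
to `c`, then its logarithmic mean also converges to `c`. -/
theorem log_mean_tendsto_of_cesaro_tendsto
    (x : ℕ → ℂ) (hx : ∃ K : ℝ, ∀ n, ‖x n‖ ≤ K) (c : ℂ)
    (hces : Tendsto (fun n : ℕ => ((n : ℂ) + 1)⁻¹ * ∑ k ∈ range (n + 1), x k)
      atTop (nhds c)) :
    Tendsto (fun n : ℕ =>
        ((Real.log (n + 2) : ℂ))⁻¹ * ∑ k ∈ range (n + 1), x k / (k + 1))
      atTop (nhds c) := by
  set a : ℕ → ℂ := fun n => ((n : ℂ) + 1)⁻¹ * ∑ k ∈ range (n + 1), x k with ha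
  set w : ℕ → ℝ := fun k => ((k : ℝ) + 2)⁻¹ with hw
  set W : ℕ → ℝ := fun n => ∑ k ∈ range n, w k with hWdef
  set L : ℕ → ℝ := fun n => Real.log ((n : ℝ) + 2) with hL
  have hLpos : ∀ n : ℕ, 0 < L n := fun n =>
    Real.log_pos (by push_cast; linarith [Nat.cast_nonneg (α := ℝ) n])
  have hLtop : Tendsto L atTop atTop := by
    apply Real.tendsto_log_atTop.comp
    exact tendsto_atTop_add_const_right atTop 2 tendsto_natCast_atTop_atTop
  have hWL : ∀ n, W n ≤ L n := by
    intro n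
    refine (aux_W_le n).trans (Real.log_le_log (by positivity) (by linarith))
  have hLW : ∀ n, L n - W n ≤ 2 := fun n => by linarith [aux_log_le n]
  have hWtop : Tendsto W atTop atTop := by
    apply tendsto_atTop_mono (fun n => by linarith [hLW n] : ∀ n, L n - 2 ≤ W n)
    exact tendsto_atTop_add_const_right atTop (-2) hLtop
  have hWdiv : Tendsto (fun n => W n / L n) atTop (nhds 1) := by
    have h2 : Tendsto (fun n => 2 / L n) atTop (nhds 0) :=
      Tendsto.div_atTop tendsto_const_nhds hLtop
    have h0 : Tendsto (fun n => (L n - W n) / L n) atTop (nhds 0) := by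
      apply squeeze_zero (fun n => div_nonneg (by linarith [hWL n]) (hLpos n).le) _ h2
      intro n
      exact div_le_div_of_nonneg_right (hLW n) (hLpos n).le
    have := (tendsto_const_nhds (x := (1:ℝ)) (f := atTop)).sub h0
    rw [sub_zero] at this
    refine this.congr fun n => ?_
    field_simp [(hLpos n).ne']
    ring
  set E : ℕ → ℂ := fun n => ∑ k ∈ range n, w k • (a k - c) with hEdef
  have hac : Tendsto (fun k => a k - c) atTop (nhds 0) := tendsto_sub_nhds_zero_iff.2 hces
  have hterm : (fun k => w k • (a k - c)) =o[atTop] w := by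
    have := (Asymptotics.isBigO_refl w atTop).smul_isLittleO
      ((Asymptotics.isLittleO_one_iff ℝ).2 hac)
    simpa [smul_eq_mul] using this
  have hE : E =o[atTop] W :=
    hterm.sum_range (fun k => by positivity) hWtop
  have hWO : W =O[atTop] L := by
    apply Asymptotics.isBigO_of_le
    intro n
    rw [Real.norm_of_nonneg (by positivity), Real.norm_of_nonneg (hLpos n).le]
    exact hWL n
  have hEoC : E =o[atTop] fun n => ((L n : ℝ) : ℂ) := by
    refine (hE.trans_isBigO hWO).trans_isBigO ?_
    apply Asymptotics.isBigO_of_le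
    intro n
    rw [Complex.norm_real]
  have hT2 : Tendsto (fun n => E n / ((L n : ℝ) : ℂ)) atTop (nhds 0) :=
    hEoC.tendsto_div_nhds_zero
  have hLinv : Tendsto (fun n => (((L n : ℝ) : ℂ))⁻¹) atTop (nhds 0) := by
    have h1 : Tendsto (fun n => (L n)⁻¹) atTop (nhds 0) := hLtop.inv_tendsto_atTop
    have := (Complex.continuous_ofReal.tendsto 0).comp h1
    simpa [Function.comp_def, Complex.ofReal_inv] using this
  have hT1 : Tendsto (fun n => (((L n : ℝ) : ℂ))⁻¹ * a n) atTop (nhds 0) := by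
    simpa using hLinv.mul hces
  have hT3 : Tendsto (fun n => c * (((W n / L n : ℝ)) : ℂ)) atTop (nhds c) := by
    have := (Complex.continuous_ofReal.tendsto 1).comp hWdiv
    simpa using this.const_mul c
  have hsum := (hT1.add hT2).add hT3
  rw [zero_add, zero_add] at hsum
  refine hsum.congr fun n => ?_
  -- pointwise identity
  have hP : ∑ k ∈ range n, (((k : ℂ) + 1)⁻¹ * ∑ j ∈ range (k + 1), x j) / ((k : ℂ) + 2)
      = E n + c * ((W n : ℝ) : ℂ) := by
    rw [hEdef, hWdef]
    push_cast
    rw [mul_sum, ← sum_add_distrib]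
    refine sum_congr rfl fun k _ => ?_
    have hcast : ((w k : ℝ) : ℂ) = ((k : ℂ) + 2)⁻¹ := by
      rw [hw]; push_cast; ring
    rw [Complex.real_smul, hcast, ha, div_eq_mul_inv]
    ring
  have hLcast : ((Real.log ((n : ℝ) + 2) : ℝ) : ℂ) = ((L n : ℝ) : ℂ) := by rw [hL]
  rw [aux_key x n, hP]
  rw [show (((n : ℂ) + 1)⁻¹ * ∑ k ∈ range (n + 1), x k) = a n from rfl]
  push_cast [Complex.ofReal_div]
  rw [hLcast]
  have hne : ((L n : ℝ) : ℂ) ≠ 0 := Complex.ofReal_ne_zero.mpr (hLpos n).ne'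
  field_simp [hne]
  ring
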